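/- There exists a (∨,0)-embedding of the semilattice S_{ω₁} into the reduced power (S_ω)^ω/fin of the countable semilattice S_ω modulo the Fréchet filter. -/

import Mathlib

set_option linter.unusedSectionVars false
set_option linter.unusedVariables false


/-- ω₁, realized as the set of ordinals below `(ℵ₁).ord`. -/
abbrev W : Type 1 := {o : Ordinal // o < (Cardinal.aleph 1).ord}

theorem W_zero_lt : (0 : Ordinal) < (Cardinal.aleph 1).ord := by
  rw [← Cardinal.ord_zero]; exact Cardinal.ord_lt_ord.2 (Cardinal.aleph_pos 1)

instance : Nonempty W := ⟨⟨0, W_zero_lt⟩⟩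

section Skappa

variable (α : Type*) [LinearOrder α]

/-- An interval `[a, b)` or a final interval `[a, κ)`. -/
def IsItv (s : Set α) : Prop := (∃ a b : α, s = Set.Ico a b) ∨ ∃ a : α, s = Set.Ici a

/-- The interval algebra: finite unions of intervals. -/
def BAlg : Set (Set α) :=
  {x | ∃ F : Set (Set α), F.Finite ∧ (∀ s ∈ F, IsItv α s) ∧ x = ⋃₀ F}

/-- The bounded members of the interval algebra. -/
def ISet : Set (Set α) := {x | x ∈ BAlg α ∧ ∃ a : α, x ⊆ Set.Iio a}

/-- The members of the interval algebra containing a final segment. -/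
def FSet : Set (Set α) := {x | x ∈ BAlg α ∧ ∃ a : α, Set.Ici a ⊆ x}

/-- The subsets that are finite or everything. -/
def DSet : Set (Set α) := {x | x.Finite ∨ x = Set.univ}

/-- The semilattice `S_κ`, as a set of pairs. -/
def SkSet : Set (Set α × Set α) :=
  (({∅} : Set (Set α)) ×ˢ ISet α) ∪ ((DSet α \ {∅}) ×ˢ FSet α)

/-- The semilattice `S_κ` as a type. -/
abbrev Sk : Type _ := ↥(SkSet α)

variable {α}

theorem BAlg_union {x y : Set α} (hx : x ∈ BAlg α) (hy : y ∈ BAlg α) :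
    x ∪ y ∈ BAlg α := by
  obtain ⟨F, hF, hFi, rfl⟩ := hx
  obtain ⟨G, hG, hGi, rfl⟩ := hy
  refine ⟨F ∪ G, hF.union hG, ?_, (Set.sUnion_union F G).symm⟩
  rintro s (h | h)
  exacts [hFi s h, hGi s h]

theorem ISet_union {x y : Set α} (hx : x ∈ ISet α) (hy : y ∈ ISet α) :
    x ∪ y ∈ ISet α := by
  obtain ⟨hxB, a, ha⟩ := hx
  obtain ⟨hyB, b, hb⟩ := hy
  exact ⟨BAlg_union hxB hyB, max a b,
    Set.union_subset (ha.trans (Set.Iio_subset_Iio (le_max_left _ _)))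
      (hb.trans (Set.Iio_subset_Iio (le_max_right _ _)))⟩

theorem FSet_union_left {x y : Set α} (hx : x ∈ BAlg α) (hy : y ∈ FSet α) :
    x ∪ y ∈ FSet α := by
  obtain ⟨hyB, a, ha⟩ := hy
  exact ⟨BAlg_union hx hyB, a, ha.trans Set.subset_union_right⟩

theorem DSet_union {x y : Set α} (hx : x ∈ DSet α) (hy : y ∈ DSet α) :
    x ∪ y ∈ DSet α := by
  rcases hx with hx | hx
  · rcases hy with hy | hy
    · exact Or.inl (hx.union hy)
    · exact Or.inr (by rw [hy, Set.union_univ])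
  · exact Or.inr (by rw [hx, Set.univ_union])

theorem SkSet_sup_mem ⦃p q : Set α × Set α⦄ (hp : p ∈ SkSet α) (hq : q ∈ SkSet α) :
    p ⊔ q ∈ SkSet α := by
  have hPQ : p ⊔ q = (p.1 ∪ q.1, p.2 ∪ q.2) := rfl
  rw [hPQ]
  rcases hp with ⟨hp1, hp2⟩ | ⟨hp1, hp2⟩
  · have hp2' : p.2 ∈ BAlg α ∧ ∃ a : α, p.2 ⊆ Set.Iio a := hp2
    rcases hq with ⟨hq1, hq2⟩ | ⟨hq1, hq2⟩
    · refine Or.inl ⟨?_, ISet_union hp2 hq2⟩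
      have e1 : p.1 = ∅ := hp1
      have e2 : q.1 = ∅ := hq1
      show p.1 ∪ q.1 ∈ ({∅} : Set (Set α))
      simp [e1, e2]
    · refine Or.inr ⟨?_, FSet_union_left hp2'.1 hq2⟩
      have e1 : p.1 = ∅ := hp1
      simpa [e1] using hq1
  · have hp2' : p.2 ∈ BAlg α ∧ ∃ a : α, Set.Ici a ⊆ p.2 := hp2
    rcases hq with ⟨hq1, hq2⟩ | ⟨hq1, hq2⟩
    · have hq2' : q.2 ∈ BAlg α ∧ ∃ a : α, q.2 ⊆ Set.Iio a := hq2
      refine Or.inr ⟨?_, ?_⟩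
      · have e2 : q.1 = ∅ := hq1
        simpa [e2] using hp1
      · have h := FSet_union_left hq2'.1 hp2
        rwa [Set.union_comm] at h
    · refine Or.inr ⟨⟨DSet_union hp1.1 hq1.1, fun h => ?_⟩, FSet_union_left hp2'.1 hq2⟩
      have h' : p.1 ∪ q.1 = ∅ := h
      exact hp1.2 (show p.1 ∈ ({∅} : Set (Set α)) from Set.union_empty_iff.1 h' |>.1)

noncomputable instance Sk.instSemilatticeSup : SemilatticeSup (Sk α) :=
  Subtype.semilatticeSup fun _ _ hx hy => SkSet_sup_mem hx hy

theorem empty_mem_BAlg : (∅ : Set α) ∈ BAlg α :=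
  ⟨∅, Set.finite_empty, by simp, by simp⟩

noncomputable instance Sk.instOrderBot [Nonempty α] : OrderBot (Sk α) where
  bot := ⟨(∅, ∅), Or.inl ⟨rfl, empty_mem_BAlg, Classical.arbitrary α, Set.empty_subset _⟩⟩
  bot_le p := ⟨Set.empty_subset _, Set.empty_subset _⟩

end Skappa

theorem univ_mem_FSet_W : (Set.univ : Set W) ∈ FSet W := by
  have hIci : Set.Ici (⟨0, W_zero_lt⟩ : W) = Set.univ :=
    Set.eq_univ_of_forall fun o => zero_le (a := o.1)
  refine ⟨⟨{Set.Ici (⟨0, W_zero_lt⟩ : W)}, Set.finite_singleton _, ?_, ?_⟩,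
    ⟨0, W_zero_lt⟩, Set.subset_univ _⟩
  · rintro s hs
    rw [Set.mem_singleton_iff] at hs
    exact Or.inr ⟨_, hs⟩
  · rw [Set.sUnion_singleton, hIci]

theorem top_mem_SkSet : ((Set.univ : Set W), (Set.univ : Set W)) ∈ SkSet W :=
  Or.inr ⟨⟨Or.inr rfl, by simp [Set.univ_eq_empty_iff]⟩, univ_mem_FSet_W⟩

open Filter Set

noncomputable section StepOne

attribute [local instance] Classical.propDecidable

/-- an enumeration of `Iio o` (junk if not countable/nonempty) -/
noncomputable def enumIio (o : Ordinal.{0}) : ℕ → Ordinal :=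
  if h : Nonempty (Set.Iio o) ∧ Countable (Set.Iio o) then
    haveI := h.1; haveI := h.2
    fun k => ((exists_surjective_nat (Set.Iio o)).choose k).1
  else fun _ => 0

theorem enumIio_lt {o : Ordinal.{0}} (h : Nonempty (Set.Iio o) ∧ Countable (Set.Iio o)) (k : ℕ) :
    enumIio o k < o := by
  rw [enumIio, dif_pos h]
  haveI := h.1; haveI := h.2
  exact ((exists_surjective_nat (Set.Iio o)).choose k).2

theorem enumIio_surj {o : Ordinal.{0}} (h : Nonempty (Set.Iio o) ∧ Countable (Set.Iio o))
    {p : Ordinal} (hp : p < o) : ∃ k, enumIio o k = p := by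
  haveI := h.1; haveI := h.2
  obtain ⟨k, hk⟩ := (exists_surjective_nat (Set.Iio o)).choose_spec ⟨p, hp⟩
  exact ⟨k, by rw [enumIio, dif_pos h, hk]⟩

noncomputable def fB : Ordinal.{0} → ℕ → ℕ :=
  WellFounded.fix wellFounded_lt fun o IH =>
    if h : Nonempty (Set.Iio o) ∧ Countable (Set.Iio o) then
      fun n => (Finset.range (n + 1)).sup (fun k => IH (enumIio o k) (enumIio_lt h k) n) + 1
    else fun _ => 0

theorem fB_eq (o : Ordinal.{0}) :
    fB o = if h : Nonempty (Set.Iio o) ∧ Countable (Set.Iio o) then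
      fun n => (Finset.range (n + 1)).sup (fun k => fB (enumIio o k) n) + 1
    else fun _ => 0 := by
  rw [fB, WellFounded.fix_eq]

theorem countable_Iio {o : Ordinal.{0}} (ho : o < (Cardinal.aleph 1).ord) :
    Countable (Set.Iio o) := by
  rw [← Cardinal.mk_le_aleph0_iff, Ordinal.mk_Iio_ordinal, ← Cardinal.lift_aleph0.{1,0}]
  rw [Cardinal.lift_le]
  have h1 : o.card < Cardinal.aleph 1 := Cardinal.lt_ord.1 ho
  rwa [← Cardinal.succ_aleph0, Order.lt_succ_iff] at h1

theorem fB_lt {p o : Ordinal.{0}} (hpo : p < o) (ho : o < (Cardinal.aleph 1).ord) :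
    ∀ᶠ n in Filter.cofinite, fB p n < fB o n := by
  have h : Nonempty (Set.Iio o) ∧ Countable (Set.Iio o) := ⟨⟨⟨p, hpo⟩⟩, countable_Iio ho⟩
  obtain ⟨k, hk⟩ := enumIio_surj h hpo
  rw [Nat.cofinite_eq_atTop, Filter.eventually_atTop]
  refine ⟨k, fun n hn => ?_⟩
  have : fB p n ≤ (Finset.range (n + 1)).sup (fun k => fB (enumIio o k) n) := by
    have hmem : k ∈ Finset.range (n + 1) := Finset.mem_range.2 (Nat.lt_succ_of_le hn)
    have := Finset.le_sup (f := fun k => fB (enumIio o k) n) hmem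
    simpa [hk] using this
  calc fB p n < (Finset.range (n + 1)).sup (fun k => fB (enumIio o k) n) + 1 :=
        Nat.lt_succ_of_le this
    _ = fB o n := by rw [fB_eq o, dif_pos h]

/-- the stage-`n` map `W → ℕ`. -/
noncomputable def gW (n : ℕ) : W → ℕ := fun a => fB a.1 n

theorem gW_lt {a b : W} (hab : a < b) : ∀ᶠ n in Filter.cofinite, gW n a < gW n b :=
  fB_lt (by exact_mod_cast hab) b.2

/-- eventually, `gW n` is an order embedding on any finite set. -/
theorem gW_emb (E : Finset W) :
    ∀ᶠ n in Filter.cofinite, ∀ a ∈ E, ∀ b ∈ E, a < b → gW n a < gW n b := by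
  rw [Filter.eventually_all_finset]
  intro a ha
  rw [Filter.eventually_all_finset]
  intro b hb
  by_cases hab : a < b
  · exact (gW_lt hab).mono fun n h _ => h
  · exact Filter.Eventually.of_forall fun n h => absurd h hab

end StepOne
section Comb

/-- `e` is the selected point of `E` at level `m` (the `≤`-largest point with `g`-value `≤ m`). -/
def IsSel (g : W → ℕ) (E : Finset W) (e : W) (m : ℕ) : Prop :=
  e ∈ E ∧ g e ≤ m ∧ ∀ e' ∈ E, g e' ≤ m → e' ≤ e

/-- the "image" of a set `b` along `g` relative to the mesh `E`. -/
def img (g : W → ℕ) (E : Finset W) (b : Set W) : Set ℕ :=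
  {m | ∃ e, IsSel g E e m ∧ e ∈ b}

variable {g : W → ℕ} {E E' : Finset W} {b b' : Set W}

theorem isSel_unique {e e' : W} {m : ℕ} (h : IsSel g E e m) (h' : IsSel g E e' m) : e = e' :=
  le_antisymm (h'.2.2 e h.1 h.2.1) (h.2.2 e' h'.1 h'.2.1)

theorem isSel_exists {m : ℕ} (h : ∃ e ∈ E, g e ≤ m) : ∃ e, IsSel g E e m := by
  classical
  obtain ⟨e₀, he₀, hge₀⟩ := h
  have hne : (E.filter (fun e => g e ≤ m)).Nonempty := ⟨e₀, Finset.mem_filter.2 ⟨he₀, hge₀⟩⟩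
  refine ⟨(E.filter (fun e => g e ≤ m)).max' hne, ?_, ?_, ?_⟩
  · exact Finset.mem_of_mem_filter _ ((E.filter (fun e => g e ≤ m)).max'_mem hne)
  · exact (Finset.mem_filter.1 ((E.filter _).max'_mem hne)).2
  · intro e' he' hge'
    exact Finset.le_max' _ _ (Finset.mem_filter.2 ⟨he', hge'⟩)

theorem img_union : img g E (b ∪ b') = img g E b ∪ img g E b' := by
  ext m
  constructor
  · rintro ⟨e, hs, he | he⟩
    exacts [Or.inl ⟨e, hs, he⟩, Or.inr ⟨e, hs, he⟩]
  · rintro (⟨e, hs, he⟩ | ⟨e, hs, he⟩)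
    exacts [⟨e, hs, Or.inl he⟩, ⟨e, hs, Or.inr he⟩]

theorem img_mono (h : b ⊆ b') : img g E b ⊆ img g E b' :=
  fun m ⟨e, hs, he⟩ => ⟨e, hs, h he⟩

theorem img_empty : img g E (∅ : Set W) = ∅ := by
  ext m; exact ⟨fun ⟨e, _, he⟩ => he.elim, fun h => h.elim⟩

theorem isSel_set_itv (e : W) : IsItv ℕ {m | IsSel g E e m} := by
  classical
  by_cases heE : e ∈ E
  · have hset : {m | IsSel g E e m}
        = {m | g e ≤ m ∧ ∀ e' ∈ E.filter (fun e' => e < e'), m < g e'} := by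
      ext m
      constructor
      · rintro ⟨_, hge, hmax⟩
        refine ⟨hge, fun e' he' => ?_⟩
        obtain ⟨he'E, hlt⟩ := Finset.mem_filter.1 he'
        by_contra hmn
        exact absurd (hmax e' he'E (le_of_not_gt hmn)) (not_le.2 hlt)
      · rintro ⟨hge, hmax⟩
        refine ⟨heE, hge, fun e' he'E hge' => ?_⟩
        by_contra hle
        exact absurd hge' (not_le.2 (hmax e' (Finset.mem_filter.2 ⟨he'E, lt_of_not_ge hle⟩)))
    by_cases hT : (E.filter (fun e' => e < e')).Nonempty
    · left
      refine ⟨g e, ((E.filter (fun e' => e < e')).image g).min' (hT.image g), ?_⟩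
      rw [hset]
      ext m
      simp only [Set.mem_setOf_eq, Set.mem_Ico]
      constructor
      · rintro ⟨h1, h2⟩
        refine ⟨h1, ?_⟩
        obtain ⟨e', he', hge'⟩ := Finset.mem_image.1 (((E.filter _).image g).min'_mem (hT.image g))
        rw [← hge']
        exact h2 e' he'
      · rintro ⟨h1, h2⟩
        exact ⟨h1, fun e' he' => lt_of_lt_of_le h2 (Finset.min'_le _ _ (Finset.mem_image_of_mem g he'))⟩
    · right
      refine ⟨g e, ?_⟩
      rw [hset]
      ext m
      simp only [Set.mem_setOf_eq, Set.mem_Ici]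
      rw [Finset.not_nonempty_iff_eq_empty] at hT
      simp [hT]
  · left
    refine ⟨0, 0, ?_⟩
    ext m
    simp only [Set.mem_setOf_eq, Set.Ico_self, Set.mem_empty_iff_false, iff_false]
    rintro ⟨he, -⟩
    exact heE he

theorem img_mem_BAlg : img g E b ∈ BAlg ℕ := by
  classical
  refine ⟨(fun e => {m | IsSel g E e m}) '' {e | e ∈ E ∧ e ∈ b}, ?_, ?_, ?_⟩
  · exact (((E : Set W).toFinite.subset (Set.sep_subset _ _)).image _)
  · rintro s ⟨e, -, rfl⟩
    exact isSel_set_itv e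
  · ext m
    constructor
    · rintro ⟨e, hs, he⟩
      exact ⟨{m | IsSel g E e m}, ⟨e, ⟨hs.1, he⟩, rfl⟩, hs⟩
    · rintro ⟨s, ⟨e, ⟨heE, heb⟩, rfl⟩, hm⟩
      exact ⟨e, hm, heb⟩

theorem img_bounded {a : W} (ha : a ∈ E) (hb : ∀ e ∈ b, e < a) :
    img g E b ⊆ Set.Iio (g a) := by
  rintro m ⟨e, ⟨heE, hge, hmax⟩, heb⟩
  by_contra hm
  exact absurd (hmax a ha (le_of_not_gt hm)) (not_le.2 (hb e heb))

theorem img_tail {a : W} (ha : a ∈ E) (hb : Set.Ici a ⊆ b) :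
    Set.Ici ((E.image g).max' ⟨g a, Finset.mem_image_of_mem g ha⟩) ⊆ img g E b := by
  intro m hm
  have hEne : E.Nonempty := ⟨a, ha⟩
  refine ⟨E.max' hEne, ⟨E.max'_mem hEne, ?_, fun e' he' _ => Finset.le_max' _ _ he'⟩, ?_⟩
  · exact le_trans (Finset.le_max' _ _ (Finset.mem_image_of_mem g (E.max'_mem hEne))) hm
  · exact hb (Finset.le_max' _ _ ha)

end Comb
section GoodSetSec

/-- `E` is a good mesh for `b`: `b` has a point of `E` below any of its points, and membership
in `b` is constant between consecutive points of `E`. -/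
def GoodSet (E : Finset W) (b : Set W) : Prop :=
  (∀ c ∈ b, ∃ a ∈ E, a ≤ c) ∧
  ∀ p ∈ E, ∀ c, p < c → (∀ t ∈ E, t ≤ c → t ≤ p) → (p ∈ b ↔ c ∈ b)

variable {g : W → ℕ} {E E' : Finset W} {b b' : Set W}

theorem goodSet_mono (hEE : E ⊆ E') (h : GoodSet E b) : GoodSet E' b := by
  classical
  constructor
  · rintro c hc
    obtain ⟨a, ha, hac⟩ := h.1 c hc
    exact ⟨a, hEE ha, hac⟩
  · intro p hp c hpc hcl
    set T := E.filter (fun t => t ≤ p) with hT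
    by_cases hne : T.Nonempty
    · obtain ⟨q, hqT, hqmax'⟩ : ∃ q ∈ T, ∀ t ∈ T, t ≤ q :=
        ⟨T.max' hne, T.max'_mem hne, fun t ht => Finset.le_max' T t ht⟩
      have hqE : q ∈ E := Finset.mem_of_mem_filter _ hqT
      have hqp : q ≤ p := (Finset.mem_filter.1 hqT).2
      have hqmax : ∀ t ∈ E, t ≤ p → t ≤ q := fun t ht htp =>
        hqmax' t (Finset.mem_filter.2 ⟨ht, htp⟩)
      have h1 : q ∈ b ↔ c ∈ b := by
        refine h.2 q hqE c (lt_of_le_of_lt hqp hpc) fun t ht htc => ?_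
        exact hqmax t ht (hcl t (hEE ht) htc)
      have h2 : q ∈ b ↔ p ∈ b := by
        rcases eq_or_lt_of_le hqp with rfl | hlt
        · exact Iff.rfl
        · exact h.2 q hqE p hlt fun t ht htp => hqmax t ht htp
      rw [← h2, h1]
    · rw [Finset.not_nonempty_iff_eq_empty, hT, Finset.filter_eq_empty_iff] at hne
      constructor
      · intro hpb
        obtain ⟨a, ha, hap⟩ := h.1 p hpb
        exact absurd hap (hne ha)
      · intro hcb
        obtain ⟨a, ha, hac⟩ := h.1 c hcb
        exact absurd (hcl a (hEE ha) hac) (hne ha)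

theorem goodSet_union_right (h : GoodSet E b) (h' : GoodSet E b') : GoodSet E (b ∪ b') := by
  constructor
  · rintro c (hc | hc)
    exacts [h.1 c hc, h'.1 c hc]
  · intro p hp c hpc hcl
    have i1 := h.2 p hp c hpc hcl
    have i2 := h'.2 p hp c hpc hcl
    constructor
    · rintro (hb | hb)
      exacts [Or.inl (i1.1 hb), Or.inr (i2.1 hb)]
    · rintro (hb | hb)
      exacts [Or.inl (i1.2 hb), Or.inr (i2.2 hb)]

theorem goodSet_union (h : GoodSet E b) (h' : GoodSet E' b') :
    GoodSet (E ∪ E') (b ∪ b') := by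
  classical
  exact goodSet_union_right (goodSet_mono Finset.subset_union_left h)
    (goodSet_mono Finset.subset_union_right h')

theorem goodSet_empty : GoodSet (∅ : Finset W) (∅ : Set W) :=
  ⟨fun c hc => hc.elim, fun p hp => absurd hp (Finset.notMem_empty p)⟩

theorem goodSet_Ico (a c : W) : GoodSet {a, c} (Set.Ico a c) := by
  classical
  constructor
  · rintro x ⟨hax, _⟩
    exact ⟨a, Finset.mem_insert_self a {c}, hax⟩
  · intro p hp q hpq hcl
    rcases Finset.mem_insert.1 hp with rfl | hp
    · constructor
      · rintro ⟨-, hac⟩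
        refine ⟨le_of_lt hpq, ?_⟩
        by_contra hq
        have hcq : c ≤ q := le_of_not_gt hq
        have := hcl c (Finset.mem_insert.2 (Or.inr (Finset.mem_singleton_self c))) hcq
        exact absurd hac (not_lt.2 this)
      · rintro ⟨haq, hqc⟩
        exact ⟨le_rfl, lt_of_le_of_lt (le_of_lt hpq) hqc⟩
    · rcases Finset.mem_singleton.1 hp with rfl
      constructor
      · rintro ⟨-, hcc⟩
        exact absurd hcc (lt_irrefl _)
      · rintro ⟨-, hqc⟩
        exact absurd (lt_trans hpq hqc) (lt_irrefl _)

theorem goodSet_Ici (a : W) : GoodSet {a} (Set.Ici a) := by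
  constructor
  · rintro x hx
    exact ⟨a, Finset.mem_singleton_self a, hx⟩
  · intro p hp q hpq hcl
    rcases Finset.mem_singleton.1 hp with rfl
    simp only [Set.mem_Ici, le_refl, true_iff]
    exact le_of_lt hpq

theorem exists_goodSet {b : Set W} (hb : b ∈ BAlg W) : ∃ E : Finset W, GoodSet E b := by
  classical
  obtain ⟨F, hF, hFi, rfl⟩ := hb
  revert hFi
  refine Set.Finite.induction_on
    (motive := fun F _ => (∀ s ∈ F, IsItv W s) → ∃ E : Finset W, GoodSet E (⋃₀ F)) F hF ?_ ?_
  · intro _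
    exact ⟨∅, by rw [Set.sUnion_empty]; exact goodSet_empty⟩
  · rintro s F hsF hFfin ih hFi
    obtain ⟨E₀, hE₀⟩ := ih fun t ht => hFi t (Set.mem_insert_of_mem s ht)
    have hs : IsItv W s := hFi s (Set.mem_insert s F)
    rw [Set.sUnion_insert]
    rcases hs with ⟨a, c, rfl⟩ | ⟨a, rfl⟩
    · exact ⟨{a, c} ∪ E₀, goodSet_union (goodSet_Ico a c) hE₀⟩
    · exact ⟨{a} ∪ E₀, goodSet_union (goodSet_Ici a) hE₀⟩

/-- Independence of the mesh: the image only depends on `b` once the mesh is good for `b`. -/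
theorem img_eq_of_good (hG : GoodSet E b) (hEE : E ⊆ E')
    (hemb : ∀ a ∈ E', ∀ c ∈ E', a < c → g a < g c) :
    img g E b = img g E' b := by
  ext m
  constructor
  · rintro ⟨e, ⟨heE, hgem, hmax⟩, heb⟩
    obtain ⟨e'', hs''⟩ := isSel_exists (E := E') ⟨e, hEE heE, hgem⟩
    refine ⟨e'', hs'', ?_⟩
    have hee : e ≤ e'' := hs''.2.2 e (hEE heE) hgem
    rcases eq_or_lt_of_le hee with rfl | hlt
    · exact heb
    · refine (hG.2 e heE e'' hlt fun t ht hte'' => ?_).1 heb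
      have hgt : g t ≤ m := by
        rcases eq_or_lt_of_le hte'' with rfl | hlt'
        · exact hs''.2.1
        · exact le_trans (le_of_lt (hemb t (hEE ht) e'' hs''.1 hlt')) hs''.2.1
      exact hmax t ht hgt
  · rintro ⟨e'', hs'', heb''⟩
    by_cases hex : ∃ t ∈ E, g t ≤ m
    · obtain ⟨e, hsel⟩ := isSel_exists hex
      refine ⟨e, hsel, ?_⟩
      have hee : e ≤ e'' := hs''.2.2 e (hEE hsel.1) hsel.2.1
      rcases eq_or_lt_of_le hee with rfl | hlt
      · exact heb''
      · refine (hG.2 e hsel.1 e'' hlt fun t ht hte'' => ?_).2 heb''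
        have hgt : g t ≤ m := by
          rcases eq_or_lt_of_le hte'' with rfl | hlt'
          · exact hs''.2.1
          · exact le_trans (le_of_lt (hemb t (hEE ht) e'' hs''.1 hlt')) hs''.2.1
        exact hsel.2.2 t ht hgt
    · exfalso
      obtain ⟨a, ha, hae⟩ := hG.1 e'' heb''
      have : g a ≤ m := by
        rcases eq_or_lt_of_le hae with rfl | hlt'
        · exact hs''.2.1
        · exact le_trans (le_of_lt (hemb a (hEE ha) e'' hs''.1 hlt')) hs''.2.1
      exact hex ⟨a, ha, this⟩

theorem isSel_self {α : W} (hemb : ∀ a ∈ E, ∀ c ∈ E, a < c → g a < g c) (hα : α ∈ E) :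
    IsSel g E α (g α) := by
  refine ⟨hα, le_rfl, fun e' he' hge' => ?_⟩
  by_contra hlt
  exact absurd hge' (not_le.2 (hemb α hα e' he' (lt_of_not_ge hlt)))

theorem mem_img_self {α : W} (hemb : ∀ a ∈ E, ∀ c ∈ E, a < c → g a < g c) (hα : α ∈ E) :
    g α ∈ img g E b ↔ α ∈ b := by
  constructor
  · rintro ⟨e, hs, heb⟩
    rwa [isSel_unique (isSel_self hemb hα) hs]
  · intro hαb
    exact ⟨α, isSel_self hemb hα, hαb⟩

end GoodSetSec
section SeqDef

instance : Infinite W := by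
  refine Infinite.of_injective (fun n : ℕ => (⟨(n : Ordinal), ?_⟩ : W)) ?_
  · exact lt_of_lt_of_le (Ordinal.nat_lt_omega0 n)
      (by rw [← Cardinal.ord_aleph0]
          exact Cardinal.ord_le_ord.2 (Cardinal.aleph0_le_aleph 1))
  · intro m n hmn
    have : (m : Ordinal) = n := congrArg Subtype.val hmn
    exact_mod_cast this

theorem snd_mem_BAlg (x : Sk W) : x.1.2 ∈ BAlg W := by
  rcases x.2 with h | h
  · exact h.2.1
  · exact h.2.1

theorem exists_E (x : Sk W) : ∃ E : Finset W, GoodSet E x.1.2 ∧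
    (x.1.1 = ∅ → ∃ a ∈ E, ∀ e ∈ x.1.2, e < a) ∧
    (x.1.1 ≠ ∅ → ∃ a ∈ E, Set.Ici a ⊆ x.1.2) := by
  classical
  obtain ⟨E₀, hE₀⟩ := exists_goodSet (snd_mem_BAlg x)
  rcases x.2 with h | h
  · obtain ⟨hB, a, hba⟩ := h.2
    refine ⟨insert a E₀, goodSet_mono (Finset.subset_insert a E₀) hE₀, ?_, ?_⟩
    · exact fun _ => ⟨a, Finset.mem_insert_self a E₀, fun e he => hba he⟩
    · intro hne
      exact absurd h.1 hne
  · obtain ⟨hB, a, hba⟩ := h.2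
    refine ⟨insert a E₀, goodSet_mono (Finset.subset_insert a E₀) hE₀, ?_, ?_⟩
    · intro hemp
      exact absurd hemp h.1.2
    · exact fun _ => ⟨a, Finset.mem_insert_self a E₀, hba⟩

/-- the chosen good mesh for `x`. -/
noncomputable def ED (x : Sk W) : Finset W := (exists_E x).choose

theorem ED_good (x : Sk W) : GoodSet (ED x) x.1.2 := (exists_E x).choose_spec.1

theorem ED_bound (x : Sk W) (h : x.1.1 = ∅) : ∃ a ∈ ED x, ∀ e ∈ x.1.2, e < a :=
  (exists_E x).choose_spec.2.1 h

theorem ED_tail (x : Sk W) (h : x.1.1 ≠ ∅) : ∃ a ∈ ED x, Set.Ici a ⊆ x.1.2 :=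
  (exists_E x).choose_spec.2.2 h

/-- image for the `D`-component. -/
noncomputable def DImg (g : W → ℕ) (d : Set W) : Set ℕ :=
  @ite _ (d = Set.univ) (Classical.dec _) Set.univ (g '' d)

theorem DImg_univ {g : W → ℕ} {d : Set W} (h : d = Set.univ) : DImg g d = Set.univ := if_pos h

theorem DImg_ne {g : W → ℕ} {d : Set W} (h : d ≠ Set.univ) : DImg g d = g '' d := if_neg h

theorem seqx_mem (x : Sk W) (n : ℕ) :
    (DImg (gW n) x.1.1, img (gW n) (ED x) x.1.2) ∈ SkSet ℕ := by
  classical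
  rcases x.2 with h | h
  · -- bounded case
    have h1 : x.1.1 = ∅ := h.1
    obtain ⟨a, haE, hab⟩ := ED_bound x h1
    refine Or.inl ⟨?_, img_mem_BAlg, gW n a, img_bounded haE hab⟩
    have : DImg (gW n) x.1.1 = ∅ := by
      rw [h1, DImg_ne (Set.empty_ne_univ (α := W)), Set.image_empty]
    exact this
  · -- final case
    have h1 : x.1.1 ≠ ∅ := h.1.2
    obtain ⟨a, haE, hab⟩ := ED_tail x h1
    refine Or.inr ⟨?_, img_mem_BAlg,
      ((ED x).image (gW n)).max' ⟨gW n a, Finset.mem_image_of_mem _ haE⟩, img_tail haE hab⟩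
    by_cases hu : x.1.1 = Set.univ
    · constructor
      · rw [show DImg (gW n) x.1.1 = Set.univ from DImg_univ hu]
        exact Or.inr rfl
      · rw [show DImg (gW n) x.1.1 = Set.univ from DImg_univ hu]
        exact fun hc => (Set.empty_ne_univ (α := ℕ)) (Set.mem_singleton_iff.1 hc).symm
    · have hfin : x.1.1.Finite := h.1.1.resolve_right hu
      constructor
      · rw [show DImg (gW n) x.1.1 = gW n '' x.1.1 from DImg_ne hu]
        exact Or.inl (hfin.image _)
      · rw [show DImg (gW n) x.1.1 = gW n '' x.1.1 from DImg_ne hu]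
        intro hc
        have hc' : (gW n) '' x.1.1 = ∅ := Set.mem_singleton_iff.1 hc
        rw [Set.image_eq_empty] at hc'
        exact h1 hc'

/-- the sequence in `Sk ℕ` representing `x`. -/
noncomputable def seqx (x : Sk W) (n : ℕ) : Sk ℕ :=
  ⟨(DImg (gW n) x.1.1, img (gW n) (ED x) x.1.2), seqx_mem x n⟩

end SeqDef
section Final

theorem fst_mem_DSet (x : Sk W) : x.1.1 ∈ DSet W := by
  rcases x.2 with h | h
  · rw [show x.1.1 = ∅ from h.1]
    exact Or.inl Set.finite_empty
  · exact h.1.1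

theorem DImg_union {g : W → ℕ} {d d' : Set W} (hd : d ∈ DSet W) (hd' : d' ∈ DSet W) :
    DImg g (d ∪ d') = DImg g d ∪ DImg g d' := by
  by_cases hu : d = Set.univ
  · rw [DImg_univ hu, DImg_univ (by rw [hu, Set.univ_union]), Set.univ_union]
  · by_cases hu' : d' = Set.univ
    · rw [DImg_univ hu', DImg_univ (by rw [hu', Set.union_univ]), Set.union_univ]
    · have hfin : d.Finite := hd.resolve_right hu
      have hfin' : d'.Finite := hd'.resolve_right hu'
      have hne : d ∪ d' ≠ Set.univ := fun h =>
        Set.infinite_univ (h ▸ (hfin.union hfin'))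
      rw [DImg_ne hu, DImg_ne hu', DImg_ne hne, Set.image_union]

theorem DImg_mono {g : W → ℕ} {d d' : Set W} (h : d ⊆ d') : DImg g d ⊆ DImg g d' := by
  by_cases hu' : d' = Set.univ
  · rw [DImg_univ hu']
    exact Set.subset_univ _
  · have hu : d ≠ Set.univ := fun hh => hu' (Set.univ_subset_iff.1 (hh ▸ h))
    rw [DImg_ne hu, DImg_ne hu']
    exact Set.image_mono h

theorem emb_anti {g : W → ℕ} {E E' : Finset W} (hEE : E ⊆ E')
    (h : ∀ a ∈ E', ∀ c ∈ E', a < c → g a < g c) :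
    ∀ a ∈ E, ∀ c ∈ E, a < c → g a < g c :=
  fun a ha c hc hac => h a (hEE ha) c (hEE hc) hac

theorem le_iff_Sk {α : Type*} [LinearOrder α] [Nonempty α] {x y : Sk α} :
    x ≤ y ↔ x.1.1 ⊆ y.1.1 ∧ x.1.2 ⊆ y.1.2 := Iff.rfl

theorem seqx_sup (x y : Sk W) :
    ∀ᶠ n in Filter.cofinite, seqx (x ⊔ y) n = seqx x n ⊔ seqx y n := by
  classical
  refine (gW_emb (ED x ∪ ED y ∪ ED (x ⊔ y))).mono fun n hemb => ?_
  set U : Finset W := ED x ∪ ED y ∪ ED (x ⊔ y) with hU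
  have hx : ED x ⊆ U := Finset.subset_union_left.trans Finset.subset_union_left
  have hy : ED y ⊆ U := Finset.subset_union_right.trans Finset.subset_union_left
  have hxy : ED (x ⊔ y) ⊆ U := Finset.subset_union_right
  apply Subtype.ext
  have h1 : (x ⊔ y).1.1 = x.1.1 ∪ y.1.1 := rfl
  have h2 : (x ⊔ y).1.2 = x.1.2 ∪ y.1.2 := rfl
  show (DImg (gW n) (x ⊔ y).1.1, img (gW n) (ED (x ⊔ y)) (x ⊔ y).1.2)
      = (DImg (gW n) x.1.1 ∪ DImg (gW n) y.1.1,
         img (gW n) (ED x) x.1.2 ∪ img (gW n) (ED y) y.1.2)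
  refine Prod.ext ?_ ?_
  · rw [h1]
    exact DImg_union (fst_mem_DSet x) (fst_mem_DSet y)
  · calc img (gW n) (ED (x ⊔ y)) (x ⊔ y).1.2
        = img (gW n) U (x ⊔ y).1.2 := img_eq_of_good (ED_good (x ⊔ y)) hxy hemb
      _ = img (gW n) U x.1.2 ∪ img (gW n) U y.1.2 := by rw [h2, img_union]
      _ = img (gW n) (ED x) x.1.2 ∪ img (gW n) (ED y) y.1.2 := by
          rw [← img_eq_of_good (ED_good x) hx hemb, ← img_eq_of_good (ED_good y) hy hemb]

theorem seqx_mono {x y : Sk W} (hxy : x ≤ y) :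
    ∀ᶠ n in Filter.cofinite, seqx x n ≤ seqx y n := by
  classical
  refine (gW_emb (ED x ∪ ED y)).mono fun n hemb => ?_
  obtain ⟨h1, h2⟩ := le_iff_Sk.1 hxy
  refine le_iff_Sk.2 ⟨DImg_mono h1, ?_⟩
  show img (gW n) (ED x) x.1.2 ⊆ img (gW n) (ED y) y.1.2
  rw [img_eq_of_good (ED_good x) Finset.subset_union_left hemb,
    img_eq_of_good (ED_good y) Finset.subset_union_right hemb]
  exact img_mono h2

theorem seqx_reflect {x y : Sk W} (h : ¬ x ≤ y) :
    ∀ᶠ n in Filter.cofinite, ¬ seqx x n ≤ seqx y n := by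
  classical
  have h' : ¬ (x.1.1 ⊆ y.1.1 ∧ x.1.2 ⊆ y.1.2) := fun hh => h (le_iff_Sk.2 hh)
  rw [not_and_or] at h'
  rcases h' with h' | h'
  · -- first components differ
    obtain ⟨α, hαx, hαy⟩ := Set.not_subset.1 h'
    have hyu : y.1.1 ≠ Set.univ := fun hh => hαy (hh ▸ Set.mem_univ α)
    have hyfin : y.1.1.Finite := (fst_mem_DSet y).resolve_right hyu
    by_cases hxu : x.1.1 = Set.univ
    · refine Filter.Eventually.of_forall fun n hle => ?_
      have hsub : Set.univ ⊆ gW n '' y.1.1 := by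
        have := hle.1
        rwa [show (seqx x n).1.1 = Set.univ from DImg_univ hxu,
          show (seqx y n).1.1 = gW n '' y.1.1 from DImg_ne hyu] at this
      exact Set.infinite_univ ((hyfin.image (gW n)).subset hsub)
    · refine (gW_emb (insert α hyfin.toFinset)).mono fun n hemb => ?_
      intro hle
      have hmem : gW n α ∈ (seqx x n).1.1 := by
        rw [show (seqx x n).1.1 = gW n '' x.1.1 from DImg_ne hxu]
        exact Set.mem_image_of_mem _ hαx
      have hmem' : gW n α ∈ gW n '' y.1.1 := by
        have := hle.1 hmem
        rwa [show (seqx y n).1.1 = gW n '' y.1.1 from DImg_ne hyu] at this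
      obtain ⟨β, hβ, hgβ⟩ := hmem'
      have hβF : β ∈ insert α hyfin.toFinset :=
        Finset.mem_insert_of_mem (hyfin.mem_toFinset.2 hβ)
      have hαF : α ∈ insert α hyfin.toFinset := Finset.mem_insert_self _ _
      have : β = α := by
        rcases lt_trichotomy β α with hlt | heq | hlt
        · exact absurd hgβ (ne_of_lt (hemb β hβF α hαF hlt))
        · exact heq
        · exact absurd hgβ (ne_of_gt (hemb α hαF β hβF hlt))
      exact hαy (this ▸ hβ)
  · -- second components differ
    obtain ⟨α, hαx, hαy⟩ := Set.not_subset.1 h'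
    refine (gW_emb (ED x ∪ ED y ∪ {α})).mono fun n hemb => ?_
    intro hle
    have hembx : ∀ a ∈ ED x ∪ {α}, ∀ c ∈ ED x ∪ {α}, a < c → gW n a < gW n c := by
      exact fun a ha c hc hac => hemb a
        (by rcases Finset.mem_union.1 ha with h1 | h1
            exacts [Finset.mem_union_left _ (Finset.mem_union_left _ h1),
              Finset.mem_union_right _ h1]) c
        (by rcases Finset.mem_union.1 hc with h1 | h1
            exacts [Finset.mem_union_left _ (Finset.mem_union_left _ h1),
              Finset.mem_union_right _ h1]) hac
    have hemby : ∀ a ∈ ED y ∪ {α}, ∀ c ∈ ED y ∪ {α}, a < c → gW n a < gW n c := by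
      exact fun a ha c hc hac => hemb a
        (by rcases Finset.mem_union.1 ha with h1 | h1
            exacts [Finset.mem_union_left _ (Finset.mem_union_right _ h1),
              Finset.mem_union_right _ h1]) c
        (by rcases Finset.mem_union.1 hc with h1 | h1
            exacts [Finset.mem_union_left _ (Finset.mem_union_right _ h1),
              Finset.mem_union_right _ h1]) hac
    have hαmemx : α ∈ ED x ∪ {α} := Finset.mem_union_right _ (Finset.mem_singleton_self α)
    have hαmemy : α ∈ ED y ∪ {α} := Finset.mem_union_right _ (Finset.mem_singleton_self α)
    have e1 : img (gW n) (ED x) x.1.2 = img (gW n) (ED x ∪ {α}) x.1.2 :=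
      img_eq_of_good (ED_good x) Finset.subset_union_left hembx
    have e2 : img (gW n) (ED y) y.1.2 = img (gW n) (ED y ∪ {α}) y.1.2 :=
      img_eq_of_good (ED_good y) Finset.subset_union_left hemby
    have hmem : gW n α ∈ (seqx x n).1.2 := by
      show gW n α ∈ img (gW n) (ED x) x.1.2
      rw [e1]
      exact (mem_img_self hembx hαmemx).2 hαx
    have hmem' : gW n α ∈ img (gW n) (ED y) y.1.2 := hle.2 hmem
    rw [e2] at hmem'
    exact hαy ((mem_img_self hemby hαmemy).1 hmem')

theorem seqx_le_iff (x y : Sk W) :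
    (↑(seqx x) : Filter.Germ (Filter.cofinite : Filter ℕ) (Sk ℕ)) ≤ ↑(seqx y) ↔ x ≤ y := by
  rw [Filter.Germ.coe_le]
  constructor
  · intro hev
    by_contra h
    obtain ⟨n, h1, h2⟩ := (hev.and (seqx_reflect h)).exists
    exact h2 h1
  · exact seqx_mono

theorem seqx_bot : seqx (⊥ : Sk W) = fun _ => (⊥ : Sk ℕ) := by
  funext n
  apply Subtype.ext
  show (DImg (gW n) (⊥ : Sk W).1.1, img (gW n) (ED ⊥) (⊥ : Sk W).1.2) = (∅, ∅)
  have h1 : (⊥ : Sk W).1.1 = ∅ := rfl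
  have h2 : (⊥ : Sk W).1.2 = ∅ := rfl
  refine Prod.ext ?_ ?_
  · rw [h1]
    show DImg (gW n) ∅ = ∅
    rw [DImg_ne (Set.empty_ne_univ (α := W)), Set.image_empty]
  · rw [h2]
    exact img_empty

end Final
/-- Lemma 7.8: there is a `(∨,0)`-embedding of `S_{ω₁}` into the reduced power
`(S_ω)^ω/fin`, i.e. the germs of sequences in `S_ω` modulo the Fréchet (cofinite)
filter on ω. Here `S_ω = Sk ℕ` and `S_{ω₁} = Sk W`. -/
theorem stmt_17 :
    ∃ h : Sk W → Filter.Germ (Filter.cofinite : Filter ℕ) (Sk ℕ),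
      Function.Injective h ∧
      (∀ x y : Sk W, h (x ⊔ y) = h x ⊔ h y) ∧
      h ⊥ = ⊥ ∧
      (∀ x y : Sk W, h x ≤ h y ↔ x ≤ y) := by
  classical
  refine ⟨fun x => ↑(seqx x), ?_, ?_, ?_, fun x y => seqx_le_iff x y⟩
  · intro x y hxy
    exact le_antisymm ((seqx_le_iff x y).1 hxy.le) ((seqx_le_iff y x).1 hxy.ge)
  · intro x y
    have hmap : ((↑(seqx x) ⊔ ↑(seqx y)) : Filter.Germ (Filter.cofinite : Filter ℕ) (Sk ℕ))
        = ↑(fun n => seqx x n ⊔ seqx y n) := Filter.Germ.map₂_coe _ _ _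
    rw [hmap]
    exact Filter.Germ.coe_eq.2 (seqx_sup x y)
  · show (↑(seqx (⊥ : Sk W)) : Filter.Germ (Filter.cofinite : Filter ℕ) (Sk ℕ)) = ⊥
    rw [seqx_bot]
    rfl
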